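/- Let F : ℝ^d → (convex compact subsets of ℝ^d) be L-Lipschitz w.r.t. the sup-norm Hausdorff distance and h > 0 with Lh < 1; set Φ(x) := x + hF(x). Let M ⊂ ℝ^d be compact, and suppose y ∉ M, z ∈ M with dist∞(z, ∂M) > 0, and ξ ∈ Φ(y) ∩ Φ(z). Then there exists x ∈ ∂M with ξ ∈ Φ(x). (Continuous version of the intersection lemma, obtained by connecting two preimages of ξ by a path within Φ⁻¹(ξ).) -/

import Mathlib

open Metric Set Pointwise

lemma tent_eq (x : ℝ) :
    max 0 (1 - |x|) = (max 0 (x+1) - max 0 x) - (max 0 x - max 0 (x-1)) := by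
  rcases le_total x 0 with hx | hx <;> rcases le_total x 1 with h1 | h1 <;>
    rcases le_total x (-1) with h2 | h2 <;>
      simp [abs_of_nonneg, abs_of_nonpos, hx, h1, h2, max_def] <;> split_ifs <;> linarith

lemma tentsum (n : ℕ) (s : ℝ) (h0 : 0 ≤ s) (h1 : s ≤ n) :
    ∑ j ∈ Finset.range (n+1), max 0 (1 - |s - j|) = 1 := by
  have key : ∀ j ∈ Finset.range (n+1), max 0 (1 - |s - (j:ℝ)|)
      = (fun j : ℕ => max 0 (s - j + 1) - max 0 (s - j)) j
        - (fun j : ℕ => max 0 (s - j + 1) - max 0 (s - j)) (j+1) := by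
    intro j _
    have h := tent_eq (s - (j:ℝ))
    simp only [h]
    push_cast
    ring_nf
  rw [Finset.sum_congr rfl key, Finset.sum_range_sub']
  push_cast
  have e1 : max 0 (s - 0 + 1) = s + 1 := by rw [max_eq_right] <;> linarith
  have e2 : max 0 (s - (0:ℝ)) = s := by rw [max_eq_right] <;> linarith
  have e3 : max 0 (s - (n+1:ℝ) + 1) = 0 := by rw [max_eq_left] <;> linarith
  have e4 : max 0 (s - (n+1:ℝ)) = 0 := by rw [max_eq_left] <;> linarith
  rw [e1, e2, e3, e4]
  ring

variable {E : Type*} [NormedAddCommGroup E] [NormedSpace ℝ E]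

lemma convex_infDist_le {K : Set E} (hcv : Convex ℝ K) (hcp : IsCompact K)
    (hn : K.Nonempty) (α : ℝ) : Convex ℝ {p : E | infDist p K ≤ α} := by
  intro p hp q hq a b ha hb hab
  obtain ⟨p', hp', hpd⟩ := hcp.exists_infDist_eq_dist hn p
  obtain ⟨q', hq', hqd⟩ := hcp.exists_infDist_eq_dist hn q
  have hmem : a • p' + b • q' ∈ K := hcv hp' hq' ha hb hab
  have key : dist (a • p + b • q) (a • p' + b • q') ≤ a * dist p p' + b * dist q q' := by
    rw [dist_eq_norm, dist_eq_norm, dist_eq_norm]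
    have : a • p + b • q - (a • p' + b • q') = a • (p - p') + b • (q - q') := by
      rw [smul_sub, smul_sub]; abel
    rw [this]
    calc ‖a • (p - p') + b • (q - q')‖ ≤ ‖a • (p - p')‖ + ‖b • (q - q')‖ := norm_add_le _ _
      _ = a * ‖p - p'‖ + b * ‖q - q'‖ := by
          rw [norm_smul, norm_smul, Real.norm_eq_abs, Real.norm_eq_abs,
            abs_of_nonneg ha, abs_of_nonneg hb]
  have : infDist (a • p + b • q) K ≤ a * dist p p' + b * dist q q' :=
    le_trans (infDist_le_dist_of_mem hmem) key
  have hp1 : dist p p' ≤ α := by rw [← hpd]; exact hp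
  have hq1 : dist q q' ≤ α := by rw [← hqd]; exact hq
  calc infDist (a • p + b • q) K ≤ a * dist p p' + b * dist q q' := this
    _ ≤ a * α + b * α := by
        have := mul_le_mul_of_nonneg_left hp1 ha
        have := mul_le_mul_of_nonneg_left hq1 hb
        linarith
    _ = α := by rw [← add_mul, hab, one_mul]

omit [NormedSpace ℝ E] in
lemma transferK (K : E → Set E) (θ : ℝ)
    (hKcp : ∀ x, IsCompact (K x)) (hKne : ∀ x, (K x).Nonempty)
    (hKlip : ∀ x x' u, u ∈ K x → infDist u (K x') ≤ θ * dist x x')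
    (p x x' : E) : infDist p (K x') ≤ infDist p (K x) + θ * dist x x' := by
  obtain ⟨u, hu, hud⟩ := (hKcp x).exists_infDist_eq_dist (hKne x) p
  have h1 : infDist p (K x') ≤ infDist u (K x') + dist p u := infDist_le_infDist_add_dist
  have h2 : infDist u (K x') ≤ θ * dist x x' := hKlip x x' u hu
  rw [← hud] at h1
  linarith

lemma selK (K : E → Set E) (θ : ℝ) (hθ0 : 0 ≤ θ)
    (hKne : ∀ x, (K x).Nonempty) (hKcv : ∀ x, Convex ℝ (K x))
    (hKcp : ∀ x, IsCompact (K x))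
    (hKlip : ∀ x x' u, u ∈ K x → infDist u (K x') ≤ θ * dist x x')
    (ξ : E) (γ : ℝ → E) (hγ : Continuous γ) (α : ℝ) (hα : 0 < α) :
    ∃ w : ℝ → E, Continuous w ∧ ∀ t ∈ Icc (0:ℝ) 1,
      infDist (w t) (K (γ t)) ≤ α ∧
      dist (ξ - γ t) (w t) ≤ infDist (ξ - γ t) (K (γ t)) + α := by
  classical
  have htrans := transferK K θ hKcp hKne hKlip
  -- Lipschitz-type bound for x ↦ infDist (ξ - x) (K x)
  have hflip : ∀ x x' : E, infDist (ξ - x') (K x')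
      ≤ infDist (ξ - x) (K x) + (1 + θ) * dist x x' := by
    intro x x'
    have h1 : infDist (ξ - x') (K x') ≤ infDist (ξ - x) (K x') + dist (ξ - x') (ξ - x) :=
      infDist_le_infDist_add_dist
    have h2 : dist (ξ - x') (ξ - x) = dist x x' := by
      rw [dist_eq_norm, dist_eq_norm]
      congr 1
      abel
    have h3 := htrans (ξ - x) x x'
    rw [h2] at h1
    nlinarith [dist_nonneg (x := x) (y := x')]
  set ε' : ℝ := α / (3 + θ) with hε'def
  have hε' : 0 < ε' := div_pos hα (by linarith)
  -- uniform continuity of γ on [0,1]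
  have hub := (isCompact_Icc (a := (0:ℝ)) (b := 1)).uniformContinuousOn_of_continuous
    hγ.continuousOn
  rw [Metric.uniformContinuousOn_iff] at hub
  obtain ⟨δ, hδ, hδ'⟩ := hub ε' hε'
  obtain ⟨N, hN⟩ := exists_nat_one_div_lt hδ
  set n : ℕ := N + 1 with hndef
  have hn0 : (0:ℝ) < n := by positivity
  have hn1 : 1 / (n:ℝ) < δ := by
    rw [hndef]; push_cast; exact hN
  -- nodes and nearest points
  choose u hu1 hu2 using fun j : ℕ =>
    (hKcp (γ ((j:ℝ)/n))).exists_infDist_eq_dist (hKne (γ ((j:ℝ)/n))) (ξ - γ ((j:ℝ)/n))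
  set φ : ℕ → ℝ → ℝ := fun j t => max 0 (1 - |(n:ℝ)*t - j|) with hφdef
  refine ⟨fun t => ∑ j ∈ Finset.range (n+1), φ j t • u j, ?_, ?_⟩
  · apply continuous_finset_sum
    intro j _
    exact ((continuous_const.max (continuous_const.sub
      (((continuous_const.mul continuous_id).sub continuous_const).abs))).smul
      continuous_const)
  · intro t ht
    have hsum1 : ∑ j ∈ Finset.range (n+1), φ j t = 1 := by
      have := tentsum n ((n:ℝ)*t) (by nlinarith [ht.1]) (by nlinarith [ht.2])
      simpa [hφdef] using this
    have hφnn : ∀ j, 0 ≤ φ j t := fun j => le_max_left _ _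
    -- active nodes are close
    have hactive : ∀ j ∈ Finset.range (n+1), φ j t ≠ 0 →
        dist (γ t) (γ ((j:ℝ)/n)) < ε' := by
      intro j hj hne0
      have h1 : 0 < 1 - |(n:ℝ)*t - j| := by
        by_contra hc
        push_neg at hc
        exact hne0 (max_eq_left hc)
      have hjn : (j:ℝ)/n ∈ Icc (0:ℝ) 1 := by
        constructor
        · positivity
        · rw [div_le_one hn0]
          exact_mod_cast Nat.lt_succ_iff.mp (Finset.mem_range.mp hj)
      have hdist : dist t ((j:ℝ)/n) < δ := by
        rw [Real.dist_eq]
        have he : t - (j:ℝ)/n = ((n:ℝ)*t - j)/n := by field_simp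
        rw [he, abs_div, abs_of_pos hn0]
        calc |(n:ℝ)*t - j| / n < 1 / n := by
              rw [div_lt_div_iff_of_pos_right hn0]
              linarith
          _ < δ := hn1
      exact hδ' t ht ((j:ℝ)/n) hjn hdist
    set tj : ℕ → ℝ := fun j => (j:ℝ)/n with htj
    set S2 : Set E := {p : E | infDist p (K (γ t)) ≤ α} with hS2
    set r : ℝ := infDist (ξ - γ t) (K (γ t)) + α with hrdef
    have hC : Convex ℝ (closedBall (ξ - γ t) r ∩ S2) :=
      (convex_closedBall _ _).inter (convex_infDist_le (hKcv _) (hKcp _) (hKne _) α)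
    have hmemj : ∀ j ∈ Finset.range (n+1), φ j t ≠ 0 →
        u j ∈ closedBall (ξ - γ t) r ∩ S2 := by
      intro j hj hne0
      have hd := hactive j hj hne0
      have h2θ : (0:ℝ) ≤ 2 + θ := by linarith
      have h3θ : (0:ℝ) < 3 + θ := by linarith
      have he3 : (3+θ)*(α/(3+θ)) = α := by field_simp
      constructor
      · rw [mem_closedBall, dist_comm]
        have ha1 : dist (ξ - γ t) (ξ - γ ((j:ℝ)/n)) = dist (γ ((j:ℝ)/n)) (γ t) := by
          rw [dist_eq_norm, dist_eq_norm]; congr 1; abel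
        have ha2 : dist (ξ - γ ((j:ℝ)/n)) (u j)
            = infDist (ξ - γ ((j:ℝ)/n)) (K (γ ((j:ℝ)/n))) := (hu2 j).symm
        have ha3 := hflip (γ t) (γ ((j:ℝ)/n))
        have htri := dist_triangle (ξ - γ t) (ξ - γ ((j:ℝ)/n)) (u j)
        rw [ha1, ha2] at htri
        rw [dist_comm (γ ((j:ℝ)/n)) (γ t)] at htri
        have hmul : (2+θ) * dist (γ t) (γ ((j:ℝ)/n)) ≤ (2+θ) * ε' :=
          mul_le_mul_of_nonneg_left hd.le h2θ
        have hεα : (2 + θ) * ε' ≤ α := by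
          rw [hε'def]
          nlinarith [div_nonneg hα.le h3θ.le]
        rw [hrdef]
        linarith
      · show infDist (u j) (K (γ t)) ≤ α
        have h5 := hKlip (γ ((j:ℝ)/n)) (γ t) (u j) (hu1 j)
        rw [dist_comm] at h5
        have hmul : θ * dist (γ t) (γ ((j:ℝ)/n)) ≤ θ * ε' :=
          mul_le_mul_of_nonneg_left hd.le hθ0
        have hεα : θ * ε' ≤ α := by
          rw [hε'def]
          nlinarith [div_nonneg hα.le h3θ.le]
        linarith
    classical
    set T := (Finset.range (n+1)).filter (fun j => φ j t ≠ 0) with hT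
    have hcond : ∀ j ∈ Finset.range (n+1), φ j t • u j ≠ 0 → φ j t ≠ 0 := by
      intro j _ hne0 hφ0
      exact hne0 (by rw [hφ0, zero_smul])
    have hcond2 : ∀ j ∈ Finset.range (n+1), φ j t ≠ 0 → φ j t ≠ 0 := fun j _ hh => hh
    have hsub : ∑ j ∈ Finset.range (n+1), φ j t • u j = ∑ j ∈ T, φ j t • u j :=
      (Finset.sum_filter_of_ne hcond).symm
    have hsubw : ∑ j ∈ T, φ j t = 1 := by
      rw [hT, Finset.sum_filter_of_ne hcond2, hsum1]
    have hmem : (∑ j ∈ T, φ j t • u j) ∈ closedBall (ξ - γ t) r ∩ S2 := by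
      apply hC.sum_mem (fun j _ => hφnn j) hsubw
      intro j hjT
      rw [hT, Finset.mem_filter] at hjT
      exact hmemj j hjT.1 hjT.2
    rw [← hsub] at hmem
    refine ⟨hmem.2, ?_⟩
    rw [dist_comm]
    exact mem_closedBall.mp hmem.1

set_option maxHeartbeats 1000000 in
theorem stmt11 {d : ℕ} (F : (Fin d → ℝ) → Set (Fin d → ℝ))
    (hne : ∀ x, (F x).Nonempty) (hcv : ∀ x, Convex ℝ (F x))
    (hcp : ∀ x, IsCompact (F x))
    (L h : ℝ) (hh : 0 < h) (hLh : L * h < 1)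
    (hlip : ∀ x y, hausdorffDist (F x) (F y) ≤ L * dist x y)
    (M : Set (Fin d → ℝ)) (hM : IsCompact M)
    (y z ξ : Fin d → ℝ) (hy : y ∉ M) (hz : z ∈ M)
    (hzint : 0 < infDist z (frontier M))
    (hξy : ξ ∈ {y} + h • F y) (hξz : ξ ∈ {z} + h • F z) :
    ∃ x ∈ frontier M, ξ ∈ {x} + h • F x := by
  classical
  set θ : ℝ := max (L * h) 0 with hθdef
  have hθ0 : 0 ≤ θ := le_max_right _ _
  have hθ1 : θ < 1 := max_lt hLh one_pos
  have h1θ : 0 < 1 - θ := by linarith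
  set K : (Fin d → ℝ) → Set (Fin d → ℝ) := fun x => h • F x with hKdef
  have hKne : ∀ x, (K x).Nonempty := by
    intro x
    show (h • F x).Nonempty
    exact (hne x).smul_set
  have hKcv : ∀ x, Convex ℝ (K x) := by
    intro x
    show Convex ℝ (h • F x)
    exact (hcv x).smul h
  have hKcp : ∀ x, IsCompact (K x) := by
    intro x
    show IsCompact (h • F x)
    rw [← Set.image_smul]
    exact (hcp x).image (continuous_const_smul h)
  have hKlip : ∀ x x' u, u ∈ K x → infDist u (K x') ≤ θ * dist x x' := by
    intro x x' u hu
    obtain ⟨v, hv, rfl⟩ := hu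
    obtain ⟨v', hv', hvd⟩ := (hcp x').exists_infDist_eq_dist (hne x') v
    have h1 : infDist (h • v) (K x') ≤ dist (h • v) (h • v') :=
      infDist_le_dist_of_mem (smul_mem_smul_set hv')
    have h2 : dist (h • v) (h • v') = h * dist v v' := by
      rw [dist_smul₀, Real.norm_eq_abs, abs_of_pos hh]
    have h3 : infDist v (F x') ≤ hausdorffDist (F x) (F x') :=
      infDist_le_hausdorffDist_of_mem hv
        (hausdorffEdist_ne_top_of_nonempty_of_bounded (hne x) (hne x')
          (hcp x).isBounded (hcp x').isBounded)
    have h4 := hlip x x'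
    have h5 : (L * h) * dist x x' ≤ θ * dist x x' :=
      mul_le_mul_of_nonneg_right (le_max_left _ _) dist_nonneg
    rw [← hvd] at h2
    nlinarith [dist_nonneg (x := x) (y := x')]
  set f : (Fin d → ℝ) → ℝ := fun x => infDist (ξ - x) (K x) with hfdef
  have htrans := transferK K θ hKcp hKne hKlip
  have hflip : ∀ x x', f x' ≤ f x + (1 + θ) * dist x x' := by
    intro x x'
    have h1 : infDist (ξ - x') (K x') ≤ infDist (ξ - x) (K x') + dist (ξ - x') (ξ - x) :=
      infDist_le_infDist_add_dist
    have h2 : dist (ξ - x') (ξ - x) = dist x x' := by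
      rw [dist_eq_norm, dist_eq_norm]
      congr 1
      abel
    have h3 := htrans (ξ - x) x x'
    rw [h2] at h1
    show infDist (ξ - x') (K x') ≤ infDist (ξ - x) (K x) + (1 + θ) * dist x x'
    nlinarith [dist_nonneg (x := x) (y := x')]
  -- membership translation
  have hmemiff : ∀ x : Fin d → ℝ, ξ ∈ ({x} : Set (Fin d → ℝ)) + h • F x ↔ ξ - x ∈ K x := by
    intro x
    constructor
    · rintro ⟨a, ha, b, hb, hab⟩
      rw [Set.mem_singleton_iff] at ha
      subst ha
      have : b = ξ - a := eq_sub_of_add_eq' hab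
      rwa [← this]
    · intro hmem
      exact ⟨x, Set.mem_singleton _, ξ - x, hmem, by simp⟩
  have hfz : f z = 0 := infDist_zero_of_mem ((hmemiff z).mp hξz)
  have hfy : f y = 0 := infDist_zero_of_mem ((hmemiff y).mp hξy)
  -- continuity of f
  have hcontf : Continuous f := by
    have : LipschitzWith (Real.toNNReal (1 + θ)) f := by
      apply LipschitzWith.of_dist_le_mul
      intro a b
      rw [Real.coe_toNNReal _ (by linarith : (0:ℝ) ≤ 1 + θ), Real.dist_eq, abs_sub_le_iff]
      constructor
      · have := hflip b a
        rw [dist_comm] at this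
        linarith
      · have := hflip a b
        linarith
    exact this.continuous
  have hfeq : ∀ x, f x = infDist (ξ - x) (K x) := fun _ => rfl
  -- one improvement step
  have hdrop : ∀ (γ : ℝ → (Fin d → ℝ)), Continuous γ → ∀ α : ℝ, 0 < α →
      ∃ γ' : ℝ → (Fin d → ℝ), Continuous γ' ∧ ∀ t ∈ Icc (0:ℝ) 1,
        f (γ' t) ≤ θ * f (γ t) + 2*α ∧ dist (γ' t) (γ t) ≤ f (γ t) + α := by
    intro γ hγ α hα
    obtain ⟨w, hw, hwprop⟩ := selK K θ hθ0 hKne hKcv hKcp hKlip ξ γ hγ α hα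
    refine ⟨fun t => ξ - w t, continuous_const.sub hw, ?_⟩
    intro t ht
    obtain ⟨hw1, hw2⟩ := hwprop t ht
    rw [← hfeq (γ t)] at hw2
    have hd : dist (ξ - w t) (γ t) = dist (ξ - γ t) (w t) := by
      rw [dist_eq_norm, dist_eq_norm]
      congr 1
      abel
    have hd2 : dist (ξ - w t) (γ t) ≤ f (γ t) + α := by rw [hd]; exact hw2
    constructor
    · have hgoal : infDist (ξ - (ξ - w t)) (K (ξ - w t)) ≤ θ * f (γ t) + 2*α := by
        rw [sub_sub_cancel]
        have h1 := htrans (w t) (γ t) (ξ - w t)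
        have h2 : dist (γ t) (ξ - w t) ≤ f (γ t) + α := by rw [dist_comm]; exact hd2
        have h3 : θ * dist (γ t) (ξ - w t) ≤ θ * (f (γ t) + α) :=
          mul_le_mul_of_nonneg_left h2 hθ0
        have h4 : θ * α ≤ α := by nlinarith
        linarith
      exact hgoal
    · exact hd2
  set B : ℝ := (1 + θ) * dist z y with hBdef
  have hB0 : 0 ≤ B := by positivity
  -- iteration
  have hiter : ∀ (α : ℝ), 0 < α → ∀ k : ℕ,
      ∃ γ : ℝ → (Fin d → ℝ), Continuous γ ∧
        (∀ t ∈ Icc (0:ℝ) 1, f (γ t) ≤ θ^k * B + 2*α/(1-θ)) ∧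
        f (γ 0) ≤ 2*α/(1-θ) ∧ f (γ 1) ≤ 2*α/(1-θ) ∧
        dist (γ 0) z ≤ k*(2*α/(1-θ) + α) ∧ dist (γ 1) y ≤ k*(2*α/(1-θ) + α) := by
    intro α hα
    have hE0 : 0 ≤ 2*α/(1-θ) := by positivity
    intro k
    induction k with
    | zero =>
      have hγ0 : z + (0:ℝ) • (y - z) = z := by simp
      have hγ1 : z + (1:ℝ) • (y - z) = y := by simp
      refine ⟨fun t => z + t • (y - z),
        continuous_const.add (continuous_id.smul continuous_const), ?_, ?_, ?_, ?_, ?_⟩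
      · intro t ht
        have hfl := hflip z (z + t • (y - z))
        rw [hfz] at hfl
        have hdd : dist z (z + t • (y - z)) ≤ dist z y := by
          rw [dist_eq_norm, dist_eq_norm]
          have e : z - (z + t • (y - z)) = -(t • (y - z)) := by abel
          rw [e, norm_neg, norm_smul, Real.norm_eq_abs, abs_of_nonneg ht.1,
            ← norm_neg (z - y)]
          have e2 : -(z - y) = y - z := by abel
          rw [e2]
          nlinarith [norm_nonneg (y - z), ht.2]
        have : (1+θ) * dist z (z + t • (y - z)) ≤ (1+θ) * dist z y :=
          mul_le_mul_of_nonneg_left hdd (by linarith)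
        rw [pow_zero, one_mul, hBdef]
        linarith
      · show f (z + (0:ℝ) • (y - z)) ≤ 2*α/(1-θ)
        rw [hγ0, hfz]; exact hE0
      · show f (z + (1:ℝ) • (y - z)) ≤ 2*α/(1-θ)
        rw [hγ1, hfy]; exact hE0
      · show dist (z + (0:ℝ) • (y - z)) z ≤ (0:ℕ)*(2*α/(1-θ) + α)
        rw [hγ0, dist_self]; simp
      · show dist (z + (1:ℝ) • (y - z)) y ≤ (0:ℕ)*(2*α/(1-θ) + α)
        rw [hγ1, dist_self]; simp
    | succ k ih =>
      obtain ⟨γ, hγ, hb, he0, he1, hd0, hd1⟩ := ih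
      obtain ⟨γ', hγ', hstep⟩ := hdrop γ hγ α hα
      have h0mem : (0:ℝ) ∈ Icc (0:ℝ) 1 := ⟨le_refl _, zero_le_one⟩
      have h1mem : (1:ℝ) ∈ Icc (0:ℝ) 1 := ⟨zero_le_one, le_refl _⟩
      have hEeq : θ * (2*α/(1-θ)) + 2*α = 2*α/(1-θ) := by
        field_simp
        ring
      refine ⟨γ', hγ', ?_, ?_, ?_, ?_, ?_⟩
      · intro t ht
        obtain ⟨hs1, hs2⟩ := hstep t ht
        have hmul := mul_le_mul_of_nonneg_left (hb t ht) hθ0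
        have hpow : θ * (θ^k * B) = θ^(k+1) * B := by rw [pow_succ]; ring
        nlinarith
      · obtain ⟨hs1, hs2⟩ := hstep 0 h0mem
        nlinarith [mul_le_mul_of_nonneg_left he0 hθ0]
      · obtain ⟨hs1, hs2⟩ := hstep 1 h1mem
        nlinarith [mul_le_mul_of_nonneg_left he1 hθ0]
      · obtain ⟨hs1, hs2⟩ := hstep 0 h0mem
        have htri := dist_triangle (γ' 0) (γ 0) z
        have hexp : ((k:ℝ)+1)*(2*α/(1-θ)+α) = (k:ℝ)*(2*α/(1-θ)+α) + (2*α/(1-θ)+α) := by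
          ring
        push_cast
        linarith
      · obtain ⟨hs1, hs2⟩ := hstep 1 h1mem
        have htri := dist_triangle (γ' 1) (γ 1) y
        have hexp : ((k:ℝ)+1)*(2*α/(1-θ)+α) = (k:ℝ)*(2*α/(1-θ)+α) + (2*α/(1-θ)+α) := by
          ring
        push_cast
        linarith
  -- z is in the interior of M, y is in the open complement
  have hzf : z ∉ frontier M := by
    intro hmem
    rw [infDist_zero_of_mem hmem] at hzint
    exact lt_irrefl _ hzint
  have hzi : z ∈ interior M := by
    by_contra hc
    exact hzf ⟨subset_closure hz, hc⟩
  obtain ⟨ρ, hρ, hρball⟩ := Metric.isOpen_iff.mp isOpen_interior z hzi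
  have hyc : y ∈ Mᶜ := hy
  obtain ⟨ρ', hρ', hρ'ball⟩ := Metric.isOpen_iff.mp hM.isClosed.isOpen_compl y hyc
  -- approximate frontier points
  have happrox : ∀ ε : ℝ, 0 < ε → ∃ q ∈ frontier M, f q ≤ ε := by
    intro ε hε
    obtain ⟨n, hn⟩ := exists_pow_lt_of_lt_one
      (show (0:ℝ) < (ε/2)/(B+1) by positivity) hθ1
    have hpB : θ^n * B < ε/2 := by
      have h1 : θ^n * (B+1) < ε/2 := by
        rw [lt_div_iff₀ (by linarith : (0:ℝ) < B + 1)] at hn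
        linarith [pow_nonneg hθ0 n]
      nlinarith [pow_nonneg hθ0 n]
    set α : ℝ := min ((1-θ)*ε/4) (min ρ ρ' * (1-θ) / (4*(n+1))) with hαdef
    have hα : 0 < α := by
      apply lt_min
      · positivity
      · have : 0 < min ρ ρ' := lt_min hρ hρ'
        positivity
    obtain ⟨γ, hγ, hb, he0, he1, hd0, hd1⟩ := hiter α hα n
    have hE1 : 2*α/(1-θ) ≤ ε/2 := by
      have h1 : α ≤ (1-θ)*ε/4 := min_le_left _ _
      rw [div_le_iff₀ h1θ]
      nlinarith
    have hm : 0 < min ρ ρ' := lt_min hρ hρ'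
    have h3 : (n:ℝ)*(2*α/(1-θ) + α) < min ρ ρ' := by
      have h2 : α ≤ min ρ ρ' * (1-θ) / (4*((n:ℝ)+1)) := min_le_right _ _
      have h2' : α * (4*((n:ℝ)+1)) ≤ min ρ ρ' * (1-θ) :=
        (le_div_iff₀ (by positivity : (0:ℝ) < 4*((n:ℝ)+1))).mp h2
      have hEα : (2*α/(1-θ) + α) * (1-θ) ≤ 3*α := by
        have e : (2*α/(1-θ))*(1-θ) = 2*α := by field_simp
        nlinarith [mul_nonneg hα.le hθ0]
      have h6 : (n:ℝ)*((2*α/(1-θ) + α)*(1-θ)) ≤ (n:ℝ)*(3*α) :=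
        mul_le_mul_of_nonneg_left hEα (Nat.cast_nonneg n)
      have key : ((n:ℝ)*(2*α/(1-θ)+α)) * (1-θ) < (min ρ ρ') * (1-θ) := by
        have e2 : (n:ℝ)*(2*α/(1-θ)+α)*(1-θ) = (n:ℝ)*((2*α/(1-θ)+α)*(1-θ)) := by ring
        rw [e2]
        have h7 : (n:ℝ)*(3*α) < min ρ ρ' * (1-θ) := by
          nlinarith [mul_nonneg (Nat.cast_nonneg n : (0:ℝ) ≤ (n:ℝ)) hα.le]
        linarith
      exact (mul_lt_mul_iff_of_pos_right h1θ).mp key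
    have hdist0 : dist (γ 0) z < ρ :=
      lt_of_le_of_lt hd0 (lt_of_lt_of_le h3 (min_le_left _ _))
    have hdist1 : dist (γ 1) y < ρ' :=
      lt_of_le_of_lt hd1 (lt_of_lt_of_le h3 (min_le_right _ _))
    have hγ0M : γ 0 ∈ M := interior_subset (hρball (mem_ball.mpr hdist0))
    have hγ1M : γ 1 ∉ M := hρ'ball (mem_ball.mpr hdist1)
    have hfb : ∀ t ∈ Icc (0:ℝ) 1, f (γ t) ≤ ε := by
      intro t ht
      have := hb t ht
      linarith
    -- crossing the frontier
    set A : Set ℝ := {t : ℝ | t ∈ Icc (0:ℝ) 1 ∧ γ t ∈ M} with hAdef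
    have hA0 : (0:ℝ) ∈ A := ⟨⟨le_refl _, zero_le_one⟩, hγ0M⟩
    have hAbdd : BddAbove A := ⟨1, fun t ht => ht.1.2⟩
    have hAcl : IsClosed A := by
      have : A = Icc (0:ℝ) 1 ∩ γ ⁻¹' M := rfl
      rw [this]
      exact isClosed_Icc.inter (hM.isClosed.preimage hγ)
    have htA : sSup A ∈ A := hAcl.csSup_mem ⟨0, hA0⟩ hAbdd
    have ht0 : 0 ≤ sSup A := le_csSup hAbdd hA0
    have ht1 : sSup A < 1 := by
      rcases lt_or_eq_of_le htA.1.2 with hlt | heq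
      · exact hlt
      · exfalso
        apply hγ1M
        rw [← heq]
        exact htA.2
    have hclos : γ (sSup A) ∈ closure Mᶜ := by
      refine mem_closure_of_tendsto ((hγ.tendsto (sSup A)).mono_left (nhdsWithin_le_nhds (s := Set.Ioi (sSup A)))) ?_
      filter_upwards [Ioo_mem_nhdsGT_of_mem (⟨le_refl (sSup A), ht1⟩ : sSup A ∈ Ico (sSup A) 1)] with t ht
      by_contra hmem
      simp only [Set.mem_compl_iff, not_not] at hmem
      have htmemA : t ∈ A := ⟨⟨le_trans ht0 ht.1.le, ht.2.le⟩, hmem⟩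
      exact absurd (le_csSup hAbdd htmemA) (not_le.mpr ht.1)
    refine ⟨γ (sSup A), ?_, hfb (sSup A) ⟨ht0, htA.1.2⟩⟩
    rw [frontier_eq_closure_inter_closure]
    exact ⟨subset_closure htA.2, hclos⟩
  -- conclude by minimizing f on the compact nonempty frontier
  obtain ⟨q1, hq1, -⟩ := happrox 1 one_pos
  have hfM : IsCompact (frontier M) :=
    hM.of_isClosed_subset isClosed_frontier hM.isClosed.frontier_subset
  obtain ⟨q₀, hq₀mem, hq₀min⟩ := hfM.exists_isMinOn ⟨q1, hq1⟩ hcontf.continuousOn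
  have hfq₀ : f q₀ = 0 := by
    by_contra hc
    have hpos : 0 < f q₀ := lt_of_le_of_ne (by rw [hfeq]; exact infDist_nonneg) (Ne.symm hc)
    obtain ⟨q, hqmem, hqle⟩ := happrox (f q₀ / 2) (by linarith)
    have := hq₀min hqmem
    simp only [Set.mem_setOf_eq] at this
    linarith
  refine ⟨q₀, hq₀mem, (hmemiff q₀).mpr ?_⟩
  rw [hfeq] at hfq₀
  exact ((hKcp q₀).isClosed.mem_iff_infDist_zero (hKne q₀)).mpr hfq₀
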